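/- Let 𝓔 be an extension (i.e., a reflexive sheaf on the blow-up B̂ of the unit ball at 0 restricting to p*𝓔₀ off the exceptional divisor D ≅ ℂℙ^{n-1}), with Harder–Narasimhan slopes μ₁ > ⋯ > μ_m of ι*𝓔. Let 𝓔^k be the Hecke transform of 𝓔 along the k-th step E_k of the Harder–Narasimhan filtration. Then Φ(𝓔^k) ≤ max{μ_{k+1} − μ_m, Φ(𝓔) − 1, μ_{k+1} − μ_k + 1, μ₁ − μ_k}, where Φ(𝓕) := μ_max(ι*𝓕) − μ_min(ι*𝓕). -/
import Mathlib

universe u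

/-- An abstract Harder–Narasimhan slope theory for torsion-free sheaves on `ℂℙ^{n-1}`
(with respect to the polarization `O(1)`): `μmax`/`μmin` are the maximal/minimal
Harder–Narasimhan slopes, `twist E k = E ⊗ O(k)` shifts all slopes by `k`, and
`SES A E B` records a short exact sequence `0 → A → E → B → 0`; any subsheaf bound gives
`μmax E ≤ max (μmax A) (μmax B)`, and dually for `μmin`. -/
structure SlopeTheory where
  Obj : Type u
  μmax : Obj → ℚ
  μmin : Obj → ℚ
  twist : Obj → ℤ → Obj
  SES : Obj → Obj → Obj → Prop
  μmin_le_μmax : ∀ E, μmin E ≤ μmax E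
  μmax_twist : ∀ E k, μmax (twist E k) = μmax E + k
  μmin_twist : ∀ E k, μmin (twist E k) = μmin E + k
  μmax_le : ∀ {A E B}, SES A E B → μmax E ≤ max (μmax A) (μmax B)
  μmin_ge : ∀ {A E B}, SES A E B → min (μmin A) (μmin B) ≤ μmin E

/-- (Lemma 3.2 of Chen–Sun.)  Let `𝓔` be an extension (a reflexive
sheaf on the blow-up `B̂` restricting to `p^*𝓔₀` off the exceptional divisor
`D ≅ ℂℙ^{n-1}`), with Harder–Narasimhan slopes `μ₁ > ⋯ > μ_m` of `ι^*𝓔`, and let `𝓔^k`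
be the Hecke transform of `𝓔` along the `k`-th step `E_k` of the Harder–Narasimhan
filtration.  Since `N_D^* ≅ O(1)`, the restriction `ι^*𝓔^k` sits in
`0 → ((ι^*𝓔)/E_k)(1) → ι^*𝓔^k → E_k → 0`.  Then
`Φ(𝓔^k) ≤ max {μ_{k+1} − μ_m, Φ(𝓔) − 1, μ_{k+1} − μ_k + 1, μ₁ − μ_k}`, where
`Φ(𝓕) = μmax(ι^*𝓕) − μmin(ι^*𝓕)`; here `Φ(𝓔) = μ₁ − μ_m`.

Here `Ek` is the filtration step (with `μmax Ek = μ₁`, `μmin Ek = μ_k`), `Q = (ι^*𝓔)/E_k`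
(with `μmax Q = μ_{k+1}`, `μmin Q = μ_m`), and `Ek' = ι^*𝓔^k`. -/
theorem hecke_transform_slope_bound (T : SlopeTheory.{u})
    (μ1 μk μk1 μm : ℚ)
    {Ek Q Ek' : T.Obj}
    (hEkmax : T.μmax Ek = μ1) (hEkmin : T.μmin Ek = μk)
    (hQmax : T.μmax Q = μk1) (hQmin : T.μmin Q = μm)
    (h : T.SES (T.twist Q 1) Ek' Ek) :
    T.μmax Ek' - T.μmin Ek' ≤
      max (max (μk1 - μm) ((μ1 - μm) - 1)) (max (μk1 - μk + 1) (μ1 - μk)) := by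
  have hmax := T.μmax_le h
  have hmin := T.μmin_ge h
  rw [T.μmax_twist, hQmax, hEkmax] at hmax
  rw [T.μmin_twist, hQmin, hEkmin] at hmin
  push_cast at hmax hmin
  rw [le_max_iff] at hmax
  have hmin' : μm + 1 ≤ T.μmin Ek' ∨ μk ≤ T.μmin Ek' := by
    rcases min_cases (μm + (1:ℚ)) μk with ⟨he, _⟩ | ⟨he, _⟩
    · left; rw [he] at hmin; exact hmin
    · right; rw [he] at hmin; exact hmin
  rcases hmax with h1 | h1 <;> rcases hmin' with h2 | h2
  · exact le_trans (by linarith) (le_max_of_le_left (le_max_left _ _))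
  · exact le_trans (by linarith) (le_max_of_le_right (le_max_left _ _))
  · exact le_trans (by linarith) (le_max_of_le_left (le_max_right _ _))
  · exact le_trans (by linarith) (le_max_of_le_right (le_max_right _ _))
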